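/- With notation as in the previous setting (K a T-tile, B⁻¹K ⊆ K, q = |det B|, K_i = (B⁻¹K + B⁻¹v_i + T) ∩ K), each K_i has measure |K_i| = |K|/q. -/

import Mathlib

open MeasureTheory Set

variable {n : ℕ}

/-- `T` is a full rank lattice in `ℝⁿ`: the integer span of a vector space basis. -/
def IsFullRankLattice (T : Set (Fin n → ℝ)) : Prop :=
  ∃ g : Fin n → (Fin n → ℝ), LinearIndependent ℝ g ∧
    Submodule.span ℝ (Set.range g) = ⊤ ∧
    T = {x | ∃ m : Fin n → ℤ, x = ∑ i, (m i : ℝ) • g i}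

/-- `K` is a `T`-tile: the translates `K + t`, `t ∈ T`, tile `ℝⁿ` up to measure zero. -/
def IsTransTile (T : Set (Fin n → ℝ)) (K : Set (Fin n → ℝ)) : Prop :=
  (∀ t₁ t₂ : T, t₁ ≠ t₂ →
    volume (((· + (t₁ : Fin n → ℝ)) '' K) ∩ ((· + (t₂ : Fin n → ℝ)) '' K)) = 0) ∧
  volume (univ \ ⋃ t : T, (· + (t : Fin n → ℝ)) '' K) = 0

lemma aux_volume_image_mulVec (B : Matrix (Fin n) (Fin n) ℝ) (s : Set (Fin n → ℝ)) :
    volume (B.mulVec '' s) = ENNReal.ofReal |B.det| * volume s := by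
  have := Measure.addHaar_image_linearMap (volume) (Matrix.toLin' B) s
  rw [LinearMap.det_toLin'] at this
  rw [Matrix.toLin'_apply', Matrix.coe_mulVecLin] at this
  exact this

lemma aux_measurable_mulVec (B : Matrix (Fin n) (Fin n) ℝ) : Measurable (B.mulVec) :=
  (LinearMap.continuous_of_finiteDimensional (Matrix.mulVecLin B)).measurable

lemma aux_countable_lattice {T : Set (Fin n → ℝ)} (hT : IsFullRankLattice T) :
    T.Countable := by
  obtain ⟨g, -, -, hTg⟩ := hT
  rw [hTg]
  have : {x : Fin n → ℝ | ∃ m : Fin n → ℤ, x = ∑ i, (m i : ℝ) • g i}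
      = Set.range (fun m : Fin n → ℤ => ∑ i, (m i : ℝ) • g i) := by
    ext x; simp [eq_comm, Set.range]
  rw [this]
  exact Set.countable_range _

lemma aux_neg_mem_lattice {T : Set (Fin n → ℝ)} (hT : IsFullRankLattice T)
    {t : Fin n → ℝ} (ht : t ∈ T) : -t ∈ T := by
  obtain ⟨g, -, -, hTg⟩ := hT
  rw [hTg] at ht ⊢
  obtain ⟨m, hm⟩ := ht
  exact ⟨-m, by simp [hm, Finset.sum_neg_distrib, neg_smul]⟩

/-- translation invariance of volume for images -/
lemma aux_vol_translate (a : Fin n → ℝ) (s : Set (Fin n → ℝ)) :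
    volume ((· + a) '' s) = volume s := by
  rw [Set.image_add_right, measure_preimage_add_right]

/-- In the setting of the decomposition lemma (`K` a `T`-tile, `B⁻¹K ⊆ K`,
`q = |det B|`, `K_i = (B⁻¹K + B⁻¹v_i + T) ∩ K`), each `K_i` has measure `|K|/q`. -/
theorem tile_piece_measure
    (T : Set (Fin n → ℝ)) (hT : IsFullRankLattice T)
    (B : Matrix (Fin n) (Fin n) ℝ) (hB : IsUnit B.det)
    (hBT : ∀ t ∈ T, B.mulVec t ∈ T)
    (q : ℕ) (hq : (q : ℝ) = |B.det|)
    (v : Fin q → (Fin n → ℝ)) (hv : ∀ i, v i ∈ T)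
    (hrep : ∀ t ∈ T, ∃! i : Fin q, ∃ s ∈ T, t = v i + B.mulVec s)
    (K : Set (Fin n → ℝ)) (hK : MeasurableSet K) (htile : IsTransTile T K)
    (hBK : B⁻¹.mulVec '' K ⊆ K)
    (Ki : Fin q → Set (Fin n → ℝ))
    (hKi : ∀ i, Ki i =
      {x ∈ K | ∃ k ∈ K, ∃ t ∈ T, x = B⁻¹.mulVec k + B⁻¹.mulVec (v i) + t}) :
    ∀ i : Fin q, volume (Ki i) = volume K / q := by
  intro i
  have hdet : B.det ≠ 0 := hB.ne_zero
  -- inverse relations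
  have hBiB : ∀ x, B⁻¹.mulVec (B.mulVec x) = x := by
    intro x
    rw [Matrix.mulVec_mulVec, Matrix.nonsing_inv_mul B hB, Matrix.one_mulVec]
  have hBBi : ∀ x, B.mulVec (B⁻¹.mulVec x) = x := by
    intro x
    rw [Matrix.mulVec_mulVec, Matrix.mul_nonsing_inv B hB, Matrix.one_mulVec]
  have hinj : Function.Injective (B⁻¹.mulVec) := Function.LeftInverse.injective hBBi
  have hinjB : Function.Injective (B.mulVec) := Function.LeftInverse.injective hBiB
  have hinjadd : ∀ a : Fin n → ℝ, Function.Injective (· + a) := fun a => add_left_injective a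
  have hTcnt : T.Countable := aux_countable_lattice hT
  haveI : Countable ↥T := hTcnt.to_subtype
  -- the measure of images under B⁻¹
  have hvolBi : ∀ s : Set (Fin n → ℝ),
      volume (B⁻¹.mulVec '' s) = ENNReal.ofReal |B.det|⁻¹ * volume s := by
    intro s
    rw [aux_volume_image_mulVec, Matrix.det_nonsing_inv, Ring.inverse_eq_inv', abs_inv]
  have hnullBi : ∀ s : Set (Fin n → ℝ), volume s = 0 → volume (B⁻¹.mulVec '' s) = 0 := by
    intro s hs; rw [hvolBi, hs, mul_zero]
  set w := B⁻¹.mulVec (v i) with hw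
  set S : Set (Fin n → ℝ) := (fun k => B⁻¹.mulVec k + w) '' K with hS
  -- translates of S are images under B⁻¹ of translates of K
  have hStr : ∀ t : Fin n → ℝ, t ∈ T → (· + t) '' S
      = B⁻¹.mulVec '' ((· + (v i + B.mulVec t)) '' K) := by
    intro t ht
    rw [hS, Set.image_image, Set.image_image]
    refine Set.image_congr' fun x => ?_
    rw [Matrix.mulVec_add, Matrix.mulVec_add, hBiB, hw]
    abel
  -- measurability of S and its translates
  have hpreim : ∀ s : Set (Fin n → ℝ), B⁻¹.mulVec '' s = B.mulVec ⁻¹' s := by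
    intro s
    ext x
    constructor
    · rintro ⟨k, hk, rfl⟩; simpa [hBBi] using hk
    · intro hx; exact ⟨B.mulVec x, hx, hBiB x⟩
  have hSmeas : ∀ a : Fin n → ℝ, MeasurableSet ((· + a) '' (B⁻¹.mulVec '' K)) := by
    intro a
    rw [Set.image_add_right, hpreim]
    exact ((aux_measurable_mulVec B hK).preimage (measurable_id.add_const _))
  have hSm : ∀ t : Fin n → ℝ, MeasurableSet ((· + t) '' S) := by
    intro t
    have : (· + t) '' S = (· + (w + t)) '' (B⁻¹.mulVec '' K) := by
      rw [hS, Set.image_image, Set.image_image]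
      refine Set.image_congr' fun x => ?_
      abel
    rw [this]; exact hSmeas _
  have hS0 : MeasurableSet S := by
    have := hSm 0
    simpa using this
  have hKtr : ∀ t : Fin n → ℝ, MeasurableSet ((· + t) '' K) := by
    intro t
    rw [Set.image_add_right]
    exact hK.preimage (measurable_id.add_const _)
  -- essential disjointness of the S translates
  have hdisjS : ∀ t₁ t₂ : ↥T, t₁ ≠ t₂ →
      volume (((· + (t₁ : Fin n → ℝ)) '' S) ∩ ((· + (t₂ : Fin n → ℝ)) '' S)) = 0 := by
    intro t₁ t₂ hne
    rw [hStr _ t₁.2, hStr _ t₂.2, ← Set.image_inter hinj]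
    apply hnullBi
    have h1 : ∀ t : Fin n → ℝ, (· + (v i + B.mulVec t)) '' K
        = (· + v i) '' ((· + B.mulVec t) '' K) := by
      intro t
      rw [Set.image_image]
      symm
      refine Set.image_congr' fun x => ?_
      abel
    rw [h1, h1, ← Set.image_inter (hinjadd _), aux_vol_translate]
    have hBne : (⟨B.mulVec t₁, hBT _ t₁.2⟩ : ↥T) ≠ ⟨B.mulVec t₂, hBT _ t₂.2⟩ := by
      intro h
      apply hne
      exact Subtype.ext (hinjB (congrArg Subtype.val h))
    exact htile.1 ⟨B.mulVec t₁, hBT _ t₁.2⟩ ⟨B.mulVec t₂, hBT _ t₂.2⟩ hBne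
  -- Step A : Ki i is the union of translates of S intersected with K
  have hKiU : Ki i = ⋃ t : ↥T, ((· + (t : Fin n → ℝ)) '' S) ∩ K := by
    rw [hKi i]
    ext x
    simp only [Set.mem_setOf_eq, Set.mem_iUnion, Set.mem_inter_iff, hS, Set.mem_image]
    constructor
    · rintro ⟨hxK, k, hk, t, ht, rfl⟩
      exact ⟨⟨t, ht⟩, ⟨B⁻¹.mulVec k + w, ⟨k, hk, rfl⟩, rfl⟩, hxK⟩
    · rintro ⟨⟨t, ht⟩, ⟨y, ⟨k, hk, rfl⟩, rfl⟩, hxK⟩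
      exact ⟨hxK, k, hk, t, ht, rfl⟩
  have hstepA : volume (Ki i) = ∑' t : ↥T, volume (((· + (t : Fin n → ℝ)) '' S) ∩ K) := by
    rw [hKiU]
    refine measure_iUnion₀ ?_ (fun t => ((hSm _).inter hK).nullMeasurableSet)
    intro t₁ t₂ hne
    refine measure_mono_null ?_ (hdisjS t₁ t₂ hne)
    exact Set.inter_subset_inter Set.inter_subset_left Set.inter_subset_left
  -- Step B : volume S decomposes along the translates of K
  have hstepB : volume S = ∑' t : ↥T, volume (S ∩ ((· + (t : Fin n → ℝ)) '' K)) := by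
    set U := ⋃ t : ↥T, (· + (t : Fin n → ℝ)) '' K with hU
    have hSU : volume S = volume (S ∩ U) := by
      have h1 : volume (S \ U) = 0 :=
        measure_mono_null (Set.diff_subset_diff_left (Set.subset_univ S)) htile.2
      have h2 : volume S ≤ volume (S ∩ U) + volume (S \ U) := by
        conv_lhs => rw [← Set.inter_union_diff S U]
        exact measure_union_le _ _
      rw [h1, add_zero] at h2
      exact le_antisymm h2 (measure_mono Set.inter_subset_left)
    rw [hSU, hU, Set.inter_iUnion]
    refine measure_iUnion₀ ?_ (fun t => (hS0.inter (hKtr _)).nullMeasurableSet)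
    intro t₁ t₂ hne
    refine measure_mono_null ?_ (htile.1 t₁ t₂ hne)
    exact Set.inter_subset_inter Set.inter_subset_right Set.inter_subset_right
  -- Step C : each summand in B equals a summand in A with t replaced by -t
  have hstepC : ∀ t : Fin n → ℝ, volume (S ∩ ((· + t) '' K))
      = volume (((· + (-t)) '' S) ∩ K) := by
    intro t
    rw [← aux_vol_translate (-t) (S ∩ ((· + t) '' K)), Set.image_inter (hinjadd _)]
    congr 2
    rw [Set.image_image]
    simp
  -- the negation equivalence on T
  let e : ↥T ≃ ↥T :=
    { toFun := fun t => ⟨-t, aux_neg_mem_lattice hT t.2⟩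
      invFun := fun t => ⟨-t, aux_neg_mem_lattice hT t.2⟩
      left_inv := fun t => by simp
      right_inv := fun t => by simp }
  have hsum : ∑' t : ↥T, volume (((· + ((t : Fin n → ℝ))) '' S) ∩ K)
      = ∑' t : ↥T, volume (((· + (-(t : Fin n → ℝ))) '' S) ∩ K) := by
    exact (e.tsum_eq (fun t : ↥T => volume (((· + ((t : Fin n → ℝ))) '' S) ∩ K))).symm
  have hKiS : volume (Ki i) = volume S := by
    rw [hstepA, hsum, hstepB]
    congr 1
    ext t
    exact (hstepC (t : Fin n → ℝ)).symm
  -- Step D : volume S = volume K / q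
  have hq0 : (q : ℝ) ≠ 0 := by
    rw [hq]; exact abs_ne_zero.mpr hdet
  have hqnat : q ≠ 0 := fun h => hq0 (by simp [h])
  have hvolS : volume S = volume K / q := by
    have h1 : S = (· + w) '' (B⁻¹.mulVec '' K) := by
      rw [hS, Set.image_image]
    rw [h1, aux_vol_translate, hvolBi, ← hq]
    rw [ENNReal.ofReal_inv_of_pos (by positivity), ENNReal.ofReal_natCast]
    rw [ENNReal.div_eq_inv_mul]
  rw [hKiS, hvolS]
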